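/- Let λ be a Young diagram, let n_λ = (n_□)_{□∈λ} be a reversed plane partition of shape λ, and let g, k₁ ∈ ℤ; set k₂ = 2g − 2 − k₁. Define the integers R₁ = n₀₀ + Σ_{(i,j)∈λ, i≥1}(n_{ij} − n_{i−1,j}) + Σ_{(i,j)∈λ, j≥1}(n_{ij} − n_{i,j−1}) − Σ_{(i,j)∈λ, i≥1, j≥1}(n_{ij} − n_{i−1,j−1}) and R₂ = Σ_{(i,j)∈λ, (i,j)≠(0,0)} (n_{ij} − i·k₁ − j·k₂ + 1 − g) − Σ_{((i,j),(l,k))∈λ×λ, (i,j)≠(l,k), (i,j)≠(l+1,k+1)} (n_{lk} − n_{ij} − (i−l)·k₁ − (j−k)·k₂ + 1 − g) + Σ_{((i,j),(l,k))∈λ×λ, (i,j)≠(l−1,k), (i,j)≠(l,k+1)} (n_{lk} − n_{ij} − (i−l+1)·k₁ − (j−k)·k₂ + 1 − g). Then R₁ + R₂ ≡ k₁·(c_λ + |λ|) + (1−g)·|λ| + |n_λ| (mod 2). -/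
import Mathlib

lemma sum_fst_shift (μ : YoungDiagram) {M : Type*} [AddCommMonoid M] (t : ℕ × ℕ → M) :
    ∑ c ∈ μ.cells.filter (fun c => 1 ≤ c.1), t c
      = ∑ c ∈ μ.cells.filter (fun c => (c.1 + 1, c.2) ∈ μ.cells), t (c.1 + 1, c.2) := by
  refine Finset.sum_nbij' (fun c => (c.1 - 1, c.2)) (fun c => (c.1 + 1, c.2)) ?_ ?_ ?_ ?_ ?_ <;>
    simp only [Finset.mem_filter, YoungDiagram.mem_cells]
  · rintro ⟨a, b⟩ ⟨h1, h2⟩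
    refine ⟨μ.up_left_mem (Nat.sub_le _ _) le_rfl h1, ?_⟩
    simpa [Nat.sub_add_cancel h2] using h1
  · rintro ⟨a, b⟩ ⟨h1, h2⟩
    exact ⟨h2, by omega⟩
  · rintro ⟨a, b⟩ ⟨h1, h2⟩; simp; omega
  · rintro ⟨a, b⟩ ⟨h1, h2⟩; simp
  · rintro ⟨a, b⟩ ⟨h1, h2⟩; congr 1; simp; omega

lemma sum_snd_shift (μ : YoungDiagram) {M : Type*} [AddCommMonoid M] (t : ℕ × ℕ → M) :
    ∑ c ∈ μ.cells.filter (fun c => 1 ≤ c.2), t c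
      = ∑ c ∈ μ.cells.filter (fun c => (c.1, c.2 + 1) ∈ μ.cells), t (c.1, c.2 + 1) := by
  refine Finset.sum_nbij' (fun c => (c.1, c.2 - 1)) (fun c => (c.1, c.2 + 1)) ?_ ?_ ?_ ?_ ?_ <;>
    simp only [Finset.mem_filter, YoungDiagram.mem_cells]
  · rintro ⟨a, b⟩ ⟨h1, h2⟩
    refine ⟨μ.up_left_mem le_rfl (Nat.sub_le _ _) h1, ?_⟩
    simpa [Nat.sub_add_cancel h2] using h1
  · rintro ⟨a, b⟩ ⟨h1, h2⟩
    exact ⟨h2, by omega⟩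
  · rintro ⟨a, b⟩ ⟨h1, h2⟩; simp; omega
  · rintro ⟨a, b⟩ ⟨h1, h2⟩; simp
  · rintro ⟨a, b⟩ ⟨h1, h2⟩; congr 1; simp; omega

lemma sum_diag_shift (μ : YoungDiagram) {M : Type*} [AddCommMonoid M] (t : ℕ × ℕ → M) :
    ∑ c ∈ μ.cells.filter (fun c => 1 ≤ c.1 ∧ 1 ≤ c.2), t c
      = ∑ c ∈ μ.cells.filter (fun c => (c.1 + 1, c.2 + 1) ∈ μ.cells), t (c.1 + 1, c.2 + 1) := by
  refine Finset.sum_nbij' (fun c => (c.1 - 1, c.2 - 1)) (fun c => (c.1 + 1, c.2 + 1)) ?_ ?_ ?_ ?_ ?_ <;>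
    simp only [Finset.mem_filter, YoungDiagram.mem_cells]
  · rintro ⟨a, b⟩ ⟨h1, h2, h3⟩
    refine ⟨μ.up_left_mem (Nat.sub_le _ _) (Nat.sub_le _ _) h1, ?_⟩
    simpa [Nat.sub_add_cancel h2, Nat.sub_add_cancel h3] using h1
  · rintro ⟨a, b⟩ ⟨h1, h2⟩
    exact ⟨h2, by omega, by omega⟩
  · rintro ⟨a, b⟩ ⟨h1, h2, h3⟩; simp; omega
  · rintro ⟨a, b⟩ ⟨h1, h2⟩; simp
  · rintro ⟨a, b⟩ ⟨h1, h2, h3⟩; congr 1; simp; omega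

lemma sum_pair_fst {M : Type*} [AddCommMonoid M] (s : Finset (ℕ × ℕ)) (e : ℕ × ℕ → ℕ × ℕ)
    (t : (ℕ × ℕ) × (ℕ × ℕ) → M) :
    ∑ p ∈ (s ×ˢ s).filter (fun p => p.1 = e p.2), t p
      = ∑ c ∈ s.filter (fun c => e c ∈ s), t (e c, c) := by
  refine Finset.sum_nbij' (fun p => p.2) (fun c => (e c, c)) ?_ ?_ ?_ ?_ ?_ <;>
    simp only [Finset.mem_filter, Finset.mem_product]
  · rintro ⟨a, b⟩ ⟨⟨h1, h2⟩, h3⟩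
    replace h3 : a = e b := h3; subst h3; exact ⟨h2, h1⟩
  · rintro c ⟨h1, h2⟩; exact ⟨⟨h2, h1⟩, trivial⟩
  · rintro ⟨a, b⟩ ⟨⟨h1, h2⟩, h3⟩
    replace h3 : a = e b := h3; subst h3; rfl
  · rintro c ⟨h1, h2⟩; trivial
  · rintro ⟨a, b⟩ ⟨⟨h1, h2⟩, h3⟩
    replace h3 : a = e b := h3; subst h3; rfl

lemma sum_pair_snd {M : Type*} [AddCommMonoid M] (s : Finset (ℕ × ℕ)) (e : ℕ × ℕ → ℕ × ℕ)
    (t : (ℕ × ℕ) × (ℕ × ℕ) → M) :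
    ∑ p ∈ (s ×ˢ s).filter (fun p => p.2 = e p.1), t p
      = ∑ c ∈ s.filter (fun c => e c ∈ s), t (c, e c) := by
  refine Finset.sum_nbij' (fun p => p.1) (fun c => (c, e c)) ?_ ?_ ?_ ?_ ?_ <;>
    simp only [Finset.mem_filter, Finset.mem_product]
  · rintro ⟨a, b⟩ ⟨⟨h1, h2⟩, h3⟩
    replace h3 : b = e a := h3; subst h3; exact ⟨h1, h2⟩
  · rintro c ⟨h1, h2⟩; exact ⟨⟨h1, h2⟩, trivial⟩
  · rintro ⟨a, b⟩ ⟨⟨h1, h2⟩, h3⟩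
    replace h3 : b = e a := h3; subst h3; rfl
  · rintro c ⟨h1, h2⟩; trivial
  · rintro ⟨a, b⟩ ⟨⟨h1, h2⟩, h3⟩
    replace h3 : b = e a := h3; subst h3; rfl

lemma sum_pair_diag {M : Type*} [AddCommMonoid M] (s : Finset (ℕ × ℕ))
    (t : (ℕ × ℕ) × (ℕ × ℕ) → M) :
    ∑ p ∈ (s ×ˢ s).filter (fun p => p.1 = p.2), t p = ∑ c ∈ s, t (c, c) := by
  have h := sum_pair_fst s id t
  simp only [id] at h
  rw [h, Finset.filter_true_of_mem (fun x hx => hx)]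
lemma sum_prod_full' {R : Type*} [CommRing R] (s : Finset (ℕ × ℕ)) (F X Y : ℕ × ℕ → R)
    (K₁ K₂ C : R) :
    ∑ p ∈ s ×ˢ s, (F p.2 - F p.1 - (X p.1 - X p.2) * K₁ - (Y p.1 - Y p.2) * K₂ + C)
      = (s.card : R) ^ 2 * C := by
  rw [Finset.sum_product]
  simp only [Finset.sum_add_distrib, Finset.sum_sub_distrib, ← Finset.sum_mul,
    Finset.sum_const, nsmul_eq_mul, ← Finset.mul_sum]
  ring

lemma sum_filter_pair_not_or {M : Type*} [AddCommGroup M] (s : Finset ((ℕ×ℕ)×(ℕ×ℕ)))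
    (p q : (ℕ×ℕ)×(ℕ×ℕ) → Prop) [DecidablePred p] [DecidablePred q]
    (hdisj : ∀ x ∈ s, ¬(p x ∧ q x)) (t : (ℕ×ℕ)×(ℕ×ℕ) → M) :
    ∑ x ∈ s.filter (fun x => ¬ p x ∧ ¬ q x), t x
      = ∑ x ∈ s, t x - ∑ x ∈ s.filter p, t x - ∑ x ∈ s.filter q, t x := by
  have h1 := Finset.sum_filter_add_sum_filter_not s (fun x => ¬ p x ∧ ¬ q x) t
  have h2 : s.filter (fun x => ¬(¬ p x ∧ ¬ q x)) = s.filter p ∪ s.filter q := by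
    rw [← Finset.filter_or]
    exact Finset.filter_congr (fun x hx => by tauto)
  have h3 : Disjoint (s.filter p) (s.filter q) := by
    rw [Finset.disjoint_left]
    intro x hx hx'
    simp only [Finset.mem_filter] at hx hx'
    exact hdisj x hx.1 ⟨hx.2, hx'.2⟩
  rw [h2, Finset.sum_union h3] at h1
  rw [sub_sub, eq_sub_iff_add_eq]; exact h1

lemma zmod2_sq : ∀ x : ZMod 2, x ^ 2 = x := by decide


/-- `R₁ = n₀₀ + Σ_{(i,j)∈λ, i≥1}(n_{ij} − n_{i−1,j}) + Σ_{(i,j)∈λ, j≥1}(n_{ij} − n_{i,j−1})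
  − Σ_{(i,j)∈λ, i,j≥1}(n_{ij} − n_{i−1,j−1})` for a reversed plane partition `f` of
shape `μ` (the term `n₀₀` is the sum of `f` over the cells equal to `(0,0)`). -/
def rppR1 (μ : YoungDiagram) (f : ℕ × ℕ → ℕ) : ℤ :=
  (∑ c ∈ μ.cells.filter (fun c => c = (0, 0)), (f c : ℤ))
  + (∑ c ∈ μ.cells.filter (fun c => 1 ≤ c.1), ((f c : ℤ) - (f (c.1 - 1, c.2) : ℤ)))
  + (∑ c ∈ μ.cells.filter (fun c => 1 ≤ c.2), ((f c : ℤ) - (f (c.1, c.2 - 1) : ℤ)))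
  - (∑ c ∈ μ.cells.filter (fun c => 1 ≤ c.1 ∧ 1 ≤ c.2),
      ((f c : ℤ) - (f (c.1 - 1, c.2 - 1) : ℤ)))

/-- `R₂ = Σ_{(i,j)∈λ, (i,j)≠(0,0)} (n_{ij} − i·k₁ − j·k₂ + 1 − g)
  − Σ_{((i,j),(l,k))∈λ×λ, (i,j)≠(l,k), (i,j)≠(l+1,k+1)}
      (n_{lk} − n_{ij} − (i−l)·k₁ − (j−k)·k₂ + 1 − g)
  + Σ_{((i,j),(l,k))∈λ×λ, (i,j)≠(l−1,k), (i,j)≠(l,k+1)}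
      (n_{lk} − n_{ij} − (i−l+1)·k₁ − (j−k)·k₂ + 1 − g)`. -/
def rppR2 (μ : YoungDiagram) (f : ℕ × ℕ → ℕ) (g k₁ k₂ : ℤ) : ℤ :=
  (∑ c ∈ μ.cells.filter (fun c => c ≠ (0, 0)),
      ((f c : ℤ) - (c.1 : ℤ) * k₁ - (c.2 : ℤ) * k₂ + 1 - g))
  - (∑ p ∈ (μ.cells ×ˢ μ.cells).filter
      (fun p => p.1 ≠ p.2 ∧ p.1 ≠ (p.2.1 + 1, p.2.2 + 1)),
      ((f p.2 : ℤ) - (f p.1 : ℤ) - ((p.1.1 : ℤ) - p.2.1) * k₁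
        - ((p.1.2 : ℤ) - p.2.2) * k₂ + 1 - g))
  + (∑ p ∈ (μ.cells ×ˢ μ.cells).filter
      (fun p => ¬((p.1.1 : ℤ) = (p.2.1 : ℤ) - 1 ∧ p.1.2 = p.2.2)
        ∧ p.1 ≠ (p.2.1, p.2.2 + 1)),
      ((f p.2 : ℤ) - (f p.1 : ℤ) - ((p.1.1 : ℤ) - p.2.1 + 1) * k₁
        - ((p.1.2 : ℤ) - p.2.2) * k₂ + 1 - g))

/-- **Lemma (parity of the virtual rank).** Let `μ` be a Young diagram, `f` a reversed
plane partition of shape `μ`, and `g, k₁ ∈ ℤ`; set `k₂ = 2g − 2 − k₁`.  Then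
`R₁ + R₂ ≡ k₁·(c_μ + |μ|) + (1−g)·|μ| + |f| (mod 2)`, where `c_μ = Σ_{(i,j)∈μ}(j−i)`
and `|f| = Σ_{□∈μ} f(□)`. -/
theorem rpp_rank_parity (μ : YoungDiagram) (f : ℕ × ℕ → ℕ)
    (hf : ∀ c c', c ∈ μ → c' ∈ μ → c.1 ≤ c'.1 → c.2 ≤ c'.2 → f c ≤ f c')
    (g k₁ : ℤ) :
    rppR1 μ f + rppR2 μ f g k₁ (2 * g - 2 - k₁)
      ≡ k₁ * ((∑ c ∈ μ.cells, ((c.2 : ℤ) - c.1)) + (μ.card : ℤ))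
          + (1 - g) * (μ.card : ℤ) + ∑ c ∈ μ.cells, (f c : ℤ) [ZMOD 2] := by
  suffices h : ((rppR1 μ f + rppR2 μ f g k₁ (2 * g - 2 - k₁) : ℤ) : ZMod 2)
      = ((k₁ * ((∑ c ∈ μ.cells, ((c.2 : ℤ) - c.1)) + (μ.card : ℤ))
          + (1 - g) * (μ.card : ℤ) + ∑ c ∈ μ.cells, (f c : ℤ) : ℤ) : ZMod 2) by
    have h2 := (ZMod.intCast_eq_intCast_iff _ _ 2).mp h
    simpa using h2
  simp only [rppR1, rppR2, YoungDiagram.card]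
  push_cast
  simp only [ne_eq]
  by_cases hne : μ.cells = ∅
  · simp [hne]
  have h00 : (0, 0) ∈ μ.cells := by
    obtain ⟨c0, hc0⟩ := Finset.nonempty_iff_ne_empty.mpr hne
    rw [YoungDiagram.mem_cells]
    exact μ.up_left_mem (Nat.zero_le _) (Nat.zero_le _) ((YoungDiagram.mem_cells _).mp hc0)
  have hfilter00 : μ.cells.filter (fun c => c = (0, 0)) = {(0, 0)} := by
    rw [Finset.filter_eq']; exact if_pos h00
  -- abbreviations
  set K : ZMod 2 := (k₁ : ZMod 2) with hK
  set G : ZMod 2 := (g : ZMod 2) with hG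
  set n : ZMod 2 := (μ.cells.card : ZMod 2) with hn
  set SF : ZMod 2 := ∑ c ∈ μ.cells, (f c : ZMod 2) with hSF
  set SX : ZMod 2 := ∑ c ∈ μ.cells, ((c.1 : ℕ) : ZMod 2) with hSX
  set SY : ZMod 2 := ∑ c ∈ μ.cells, ((c.2 : ℕ) : ZMod 2) with hSY
  set T2 : ZMod 2 := ∑ c ∈ μ.cells.filter (fun c => (c.1 + 1, c.2) ∈ μ.cells),
    ((f (c.1 + 1, c.2) : ZMod 2) - (f c : ZMod 2)) with hT2
  set T3 : ZMod 2 := ∑ c ∈ μ.cells.filter (fun c => (c.1, c.2 + 1) ∈ μ.cells),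
    ((f (c.1, c.2 + 1) : ZMod 2) - (f c : ZMod 2)) with hT3
  set T4 : ZMod 2 := ∑ c ∈ μ.cells.filter (fun c => (c.1 + 1, c.2 + 1) ∈ μ.cells),
    ((f (c.1 + 1, c.2 + 1) : ZMod 2) - (f c : ZMod 2)) with hT4
  set nv : ZMod 2 := ((μ.cells.filter (fun c => (c.1 + 1, c.2) ∈ μ.cells)).card : ZMod 2) with hnv
  set nh : ZMod 2 := ((μ.cells.filter (fun c => (c.1, c.2 + 1) ∈ μ.cells)).card : ZMod 2) with hnh
  set nd : ZMod 2 := ((μ.cells.filter (fun c => (c.1 + 1, c.2 + 1) ∈ μ.cells)).card : ZMod 2) with hnd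
  -- R1 pieces
  have h1 : ∑ x ∈ Finset.filter (fun c => c = (0, 0)) μ.cells, ((f x : ℕ) : ZMod 2)
      = ((f (0, 0) : ℕ) : ZMod 2) := by
    rw [hfilter00, Finset.sum_singleton]
  have h2 : ∑ x ∈ Finset.filter (fun c => 1 ≤ c.1) μ.cells,
      ((f x : ZMod 2) - (f (x.1 - 1, x.2) : ZMod 2)) = T2 := by
    rw [hT2, sum_fst_shift μ (fun x => (f x : ZMod 2) - (f (x.1 - 1, x.2) : ZMod 2))]
    exact Finset.sum_congr rfl fun c hc => by simp
  have h3 : ∑ x ∈ Finset.filter (fun c => 1 ≤ c.2) μ.cells,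
      ((f x : ZMod 2) - (f (x.1, x.2 - 1) : ZMod 2)) = T3 := by
    rw [hT3, sum_snd_shift μ (fun x => (f x : ZMod 2) - (f (x.1, x.2 - 1) : ZMod 2))]
    exact Finset.sum_congr rfl fun c hc => by simp
  have h4 : ∑ x ∈ Finset.filter (fun c => 1 ≤ c.1 ∧ 1 ≤ c.2) μ.cells,
      ((f x : ZMod 2) - (f (x.1 - 1, x.2 - 1) : ZMod 2)) = T4 := by
    rw [hT4, sum_diag_shift μ (fun x => (f x : ZMod 2) - (f (x.1 - 1, x.2 - 1) : ZMod 2))]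
    exact Finset.sum_congr rfl fun c hc => by simp
  -- A piece
  have h5 : ∑ x ∈ Finset.filter (fun c => ¬c = (0, 0)) μ.cells,
      ((f x : ZMod 2) - (x.1 : ZMod 2) * K - (x.2 : ZMod 2) * (2 * G - 2 - K) + 1 - G)
      = (SF - SX * K - SY * (2 * G - 2 - K) + n * (1 - G)) - ((f (0, 0) : ZMod 2) + 1 - G) := by
    have hsplit := Finset.sum_filter_add_sum_filter_not μ.cells (fun c => c = (0, 0))
      (fun x => (f x : ZMod 2) - (x.1 : ZMod 2) * K - (x.2 : ZMod 2) * (2 * G - 2 - K) + 1 - G)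
    rw [hfilter00, Finset.sum_singleton] at hsplit
    have hs : ∑ x ∈ μ.cells,
        ((f x : ZMod 2) - (x.1 : ZMod 2) * K - (x.2 : ZMod 2) * (2 * G - 2 - K) + 1 - G)
        = SF - SX * K - SY * (2 * G - 2 - K) + n * (1 - G) := by
      rw [hSF, hSX, hSY, hn]
      simp only [Finset.sum_sub_distrib, Finset.sum_add_distrib, Finset.sum_const,
        nsmul_eq_mul, mul_one, ← Finset.sum_mul]
      ring
    have h00v : ((f (0, 0) : ZMod 2) - (((0, 0) : ℕ × ℕ).1 : ZMod 2) * K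
        - (((0, 0) : ℕ × ℕ).2 : ZMod 2) * (2 * G - 2 - K) + 1 - G)
        = (f (0, 0) : ZMod 2) + 1 - G := by norm_num
    linear_combination hsplit + hs - h00v
  -- B piece
  have hdisjB : ∀ x ∈ μ.cells ×ˢ μ.cells,
      ¬(x.1 = x.2 ∧ x.1 = (x.2.1 + 1, x.2.2 + 1)) := by
    rintro ⟨⟨a, b⟩, ⟨c, d⟩⟩ _ ⟨hx1, hx2⟩
    simp only [Prod.mk.injEq] at hx1 hx2
    omega
  have h6 : ∑ x ∈ Finset.filter (fun p => ¬p.1 = p.2 ∧ ¬p.1 = (p.2.1 + 1, p.2.2 + 1))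
        (μ.cells ×ˢ μ.cells),
      ((f x.2 : ZMod 2) - (f x.1 : ZMod 2) - ((x.1.1 : ZMod 2) - (x.2.1 : ZMod 2)) * K
        - ((x.1.2 : ZMod 2) - (x.2.2 : ZMod 2)) * (2 * G - 2 - K) + 1 - G)
      = n ^ 2 * (1 - G) - n * (1 - G)
        - (-T4 + nd * (-K - (2 * G - 2 - K) + 1 - G)) := by
    have h := sum_filter_pair_not_or (μ.cells ×ˢ μ.cells) (fun x => x.1 = x.2)
      (fun x => x.1 = (x.2.1 + 1, x.2.2 + 1)) hdisjB
      (fun x => (f x.2 : ZMod 2) - (f x.1 : ZMod 2) - ((x.1.1 : ZMod 2) - (x.2.1 : ZMod 2)) * K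
        - ((x.1.2 : ZMod 2) - (x.2.2 : ZMod 2)) * (2 * G - 2 - K) + 1 - G)
    rw [sum_pair_diag, sum_pair_fst μ.cells (fun c => (c.1 + 1, c.2 + 1))] at h
    have hfull : ∑ p ∈ μ.cells ×ˢ μ.cells,
        ((f p.2 : ZMod 2) - (f p.1 : ZMod 2) - ((p.1.1 : ZMod 2) - (p.2.1 : ZMod 2)) * K
          - ((p.1.2 : ZMod 2) - (p.2.2 : ZMod 2)) * (2 * G - 2 - K) + 1 - G)
        = n ^ 2 * (1 - G) := by
      rw [hn]
      refine (Finset.sum_congr rfl fun p _ => ?_).trans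
        (sum_prod_full' μ.cells (fun c => (f c : ZMod 2)) (fun c => (c.1 : ZMod 2))
          (fun c => (c.2 : ZMod 2)) K (2 * G - 2 - K) (1 - G))
      ring
    have hdiag : ∑ c ∈ μ.cells,
        ((f c : ZMod 2) - (f c : ZMod 2) - ((c.1 : ZMod 2) - (c.1 : ZMod 2)) * K
          - ((c.2 : ZMod 2) - (c.2 : ZMod 2)) * (2 * G - 2 - K) + 1 - G)
        = n * (1 - G) := by
      rw [hn, Finset.sum_congr rfl (fun c (_ : c ∈ μ.cells) => show _ = 1 - G by ring),
        Finset.sum_const, nsmul_eq_mul]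
    have hshift : ∑ c ∈ Finset.filter (fun c => (c.1 + 1, c.2 + 1) ∈ μ.cells) μ.cells,
        ((f c : ZMod 2) - (f (c.1 + 1, c.2 + 1) : ZMod 2)
          - (((c.1 + 1 : ℕ) : ZMod 2) - (c.1 : ZMod 2)) * K
          - (((c.2 + 1 : ℕ) : ZMod 2) - (c.2 : ZMod 2)) * (2 * G - 2 - K) + 1 - G)
        = -T4 + nd * (-K - (2 * G - 2 - K) + 1 - G) := by
      rw [hT4, hnd]
      rw [Finset.sum_congr rfl (fun c (_ : c ∈ Finset.filter
          (fun c => (c.1 + 1, c.2 + 1) ∈ μ.cells) μ.cells) =>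
        show _ = -((f (c.1 + 1, c.2 + 1) : ZMod 2) - (f c : ZMod 2))
            + (-K - (2 * G - 2 - K) + 1 - G) by push_cast; ring)]
      rw [Finset.sum_add_distrib, Finset.sum_neg_distrib, Finset.sum_const, nsmul_eq_mul]
    linear_combination h + hfull - hdiag - hshift
  -- C piece
  have hCset : Finset.filter (fun p => ¬((p.1.1 : ℤ) = (p.2.1 : ℤ) - 1 ∧ p.1.2 = p.2.2)
        ∧ ¬p.1 = (p.2.1, p.2.2 + 1)) (μ.cells ×ˢ μ.cells)
      = Finset.filter (fun p => ¬p.2 = (p.1.1 + 1, p.1.2) ∧ ¬p.1 = (p.2.1, p.2.2 + 1))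
        (μ.cells ×ˢ μ.cells) := by
    apply Finset.filter_congr
    rintro ⟨⟨a, b⟩, ⟨c, d⟩⟩ _
    simp only [Prod.mk.injEq]
    constructor
    · rintro ⟨hx1, hx2⟩
      exact ⟨fun hh => hx1 ⟨by omega, by omega⟩, hx2⟩
    · rintro ⟨hx1, hx2⟩
      exact ⟨fun hh => hx1 ⟨by omega, by omega⟩, hx2⟩
  have hdisjC : ∀ x ∈ μ.cells ×ˢ μ.cells,
      ¬(x.2 = (x.1.1 + 1, x.1.2) ∧ x.1 = (x.2.1, x.2.2 + 1)) := by
    rintro ⟨⟨a, b⟩, ⟨c, d⟩⟩ _ ⟨hx1, hx2⟩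
    simp only [Prod.mk.injEq] at hx1 hx2
    omega
  have h7 : ∑ x ∈ Finset.filter (fun p => ¬((p.1.1 : ℤ) = (p.2.1 : ℤ) - 1 ∧ p.1.2 = p.2.2)
        ∧ ¬p.1 = (p.2.1, p.2.2 + 1)) (μ.cells ×ˢ μ.cells),
      ((f x.2 : ZMod 2) - (f x.1 : ZMod 2)
        - ((x.1.1 : ZMod 2) - (x.2.1 : ZMod 2) + 1) * K
        - ((x.1.2 : ZMod 2) - (x.2.2 : ZMod 2)) * (2 * G - 2 - K) + 1 - G)
      = n ^ 2 * (1 - G - K) - (T2 + nv * (1 - G))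
        - (-T3 + nh * (-K - (2 * G - 2 - K) + 1 - G)) := by
    rw [hCset]
    have h := sum_filter_pair_not_or (μ.cells ×ˢ μ.cells) (fun x => x.2 = (x.1.1 + 1, x.1.2))
      (fun x => x.1 = (x.2.1, x.2.2 + 1)) hdisjC
      (fun x => (f x.2 : ZMod 2) - (f x.1 : ZMod 2)
        - ((x.1.1 : ZMod 2) - (x.2.1 : ZMod 2) + 1) * K
        - ((x.1.2 : ZMod 2) - (x.2.2 : ZMod 2)) * (2 * G - 2 - K) + 1 - G)
    rw [sum_pair_snd μ.cells (fun c => (c.1 + 1, c.2)),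
      sum_pair_fst μ.cells (fun c => (c.1, c.2 + 1))] at h
    have hfull : ∑ p ∈ μ.cells ×ˢ μ.cells,
        ((f p.2 : ZMod 2) - (f p.1 : ZMod 2)
          - ((p.1.1 : ZMod 2) - (p.2.1 : ZMod 2) + 1) * K
          - ((p.1.2 : ZMod 2) - (p.2.2 : ZMod 2)) * (2 * G - 2 - K) + 1 - G)
        = n ^ 2 * (1 - G - K) := by
      rw [hn]
      refine (Finset.sum_congr rfl fun p _ => ?_).trans
        (sum_prod_full' μ.cells (fun c => (f c : ZMod 2)) (fun c => (c.1 : ZMod 2))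
          (fun c => (c.2 : ZMod 2)) K (2 * G - 2 - K) (1 - G - K))
      ring
    have hp : ∑ c ∈ Finset.filter (fun c => (c.1 + 1, c.2) ∈ μ.cells) μ.cells,
        ((f (c.1 + 1, c.2) : ZMod 2) - (f c : ZMod 2)
          - ((c.1 : ZMod 2) - (((c.1 + 1 : ℕ)) : ZMod 2) + 1) * K
          - ((c.2 : ZMod 2) - (c.2 : ZMod 2)) * (2 * G - 2 - K) + 1 - G)
        = T2 + nv * (1 - G) := by
      rw [hT2, hnv]
      rw [Finset.sum_congr rfl (fun c (_ : c ∈ Finset.filter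
          (fun c => (c.1 + 1, c.2) ∈ μ.cells) μ.cells) =>
        show _ = ((f (c.1 + 1, c.2) : ZMod 2) - (f c : ZMod 2)) + (1 - G) by push_cast; ring)]
      rw [Finset.sum_add_distrib, Finset.sum_const, nsmul_eq_mul]
    have hq : ∑ c ∈ Finset.filter (fun c => (c.1, c.2 + 1) ∈ μ.cells) μ.cells,
        ((f c : ZMod 2) - (f (c.1, c.2 + 1) : ZMod 2)
          - ((c.1 : ZMod 2) - (c.1 : ZMod 2) + 1) * K
          - ((((c.2 + 1 : ℕ)) : ZMod 2) - (c.2 : ZMod 2)) * (2 * G - 2 - K) + 1 - G)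
        = -T3 + nh * (-K - (2 * G - 2 - K) + 1 - G) := by
      rw [hT3, hnh]
      rw [Finset.sum_congr rfl (fun c (_ : c ∈ Finset.filter
          (fun c => (c.1, c.2 + 1) ∈ μ.cells) μ.cells) =>
        show _ = -((f (c.1, c.2 + 1) : ZMod 2) - (f c : ZMod 2))
            + (-K - (2 * G - 2 - K) + 1 - G) by push_cast; ring)]
      rw [Finset.sum_add_distrib, Finset.sum_neg_distrib, Finset.sum_const, nsmul_eq_mul]
    linear_combination h + hfull - hp - hq
  -- content sum
  have h8 : ∑ x ∈ μ.cells, ((x.2 : ZMod 2) - (x.1 : ZMod 2)) = SY - SX := by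
    rw [hSY, hSX, Finset.sum_sub_distrib]
  -- counting
  have hvcard : (μ.cells.filter fun c => 1 ≤ c.1).card
      = (μ.cells.filter fun c => (c.1 + 1, c.2) ∈ μ.cells).card := by
    simpa using sum_fst_shift μ (M := ℕ) (fun _ => 1)
  have hhcard : (μ.cells.filter fun c => 1 ≤ c.2).card
      = (μ.cells.filter fun c => (c.1, c.2 + 1) ∈ μ.cells).card := by
    simpa using sum_snd_shift μ (M := ℕ) (fun _ => 1)
  have hdcard : (μ.cells.filter fun c => 1 ≤ c.1 ∧ 1 ≤ c.2).card
      = (μ.cells.filter fun c => (c.1 + 1, c.2 + 1) ∈ μ.cells).card := by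
    simpa using sum_diag_shift μ (M := ℕ) (fun _ => 1)
  have hkey : μ.cells.filter (fun c => ¬1 ≤ c.1 ∧ ¬1 ≤ c.2) = {(0, 0)} := by
    ext ⟨a, b⟩
    simp only [Finset.mem_filter, Finset.mem_singleton, Prod.mk.injEq]
    constructor
    · rintro ⟨hm, hx1, hx2⟩
      exact ⟨by omega, by omega⟩
    · rintro ⟨rfl, rfl⟩
      exact ⟨h00, by omega, by omega⟩
  have e1 := Finset.card_filter_add_card_filter_not
    (s := μ.cells) (p := fun c => 1 ≤ c.1)
  have e2 := Finset.card_filter_add_card_filter_not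
    (s := μ.cells.filter (fun c => 1 ≤ c.1)) (p := fun c => 1 ≤ c.2)
  rw [Finset.filter_filter, Finset.filter_filter] at e2
  have e3 := Finset.card_filter_add_card_filter_not
    (s := μ.cells.filter (fun c => ¬1 ≤ c.1)) (p := fun c => 1 ≤ c.2)
  rw [Finset.filter_filter, Finset.filter_filter, hkey] at e3
  have e4 := Finset.card_filter_add_card_filter_not
    (s := μ.cells.filter (fun c => 1 ≤ c.2)) (p := fun c => 1 ≤ c.1)
  rw [Finset.filter_filter, Finset.filter_filter] at e4
  have c1 : μ.cells.filter (fun c => 1 ≤ c.2 ∧ 1 ≤ c.1)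
      = μ.cells.filter (fun c => 1 ≤ c.1 ∧ 1 ≤ c.2) :=
    Finset.filter_congr fun c _ => and_comm
  have c2 : μ.cells.filter (fun c => 1 ≤ c.2 ∧ ¬1 ≤ c.1)
      = μ.cells.filter (fun c => ¬1 ≤ c.1 ∧ 1 ≤ c.2) :=
    Finset.filter_congr fun c _ => and_comm
  rw [c1, c2] at e4
  have hcountN : μ.cells.card
        + (μ.cells.filter fun c => (c.1 + 1, c.2 + 1) ∈ μ.cells).card
      = (μ.cells.filter fun c => (c.1 + 1, c.2) ∈ μ.cells).card
        + (μ.cells.filter fun c => (c.1, c.2 + 1) ∈ μ.cells).card + 1 := by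
    rw [← hvcard, ← hhcard, ← hdcard]
    simp only [Finset.card_singleton] at e3
    omega
  have hcount : n + nd = nv + nh + 1 := by
    rw [hn, hnd, hnv, hnh]
    have := congrArg (fun m : ℕ => (m : ZMod 2)) hcountN
    push_cast at this
    linear_combination this
  have htwo : (2 : ZMod 2) = 0 := rfl
  have hn2 : n ^ 2 = n := zmod2_sq n
  linear_combination h1 + h2 + h3 - h4 + h5 - h6 + h7 - K * h8 + (1 - G) * hcount
    - K * hn2 + ((1 - G) * (nd - nh) - K * n - T4 + T3 + SY * (1 - G)) * htwo
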